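/- If ζ is a nonzero real number and s₀ = 2ζi is a root of f(s) = s - 2 + e^{-s}(s+2), then f'(s₀) = 1 - e^{-2ζi}(1 - 2ζi) ≠ 0, i.e., s₀ is a simple root. -/

import Mathlib

open Complex

theorem stmt_13 (ζ : ℝ) (hζ : ζ ≠ 0)
    (f : ℂ → ℂ) (hf : ∀ s, f s = s - 2 + (s + 2) * Complex.exp (-s))
    (hroot : f (2 * (ζ : ℂ) * Complex.I) = 0) :
    deriv f (2 * (ζ : ℂ) * Complex.I) ≠ 0 := by
  have hfe : f = fun s => s - 2 + (s + 2) * Complex.exp (-s) := funext hf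
  subst hfe
  set s₀ : ℂ := 2 * (ζ : ℂ) * Complex.I with hs₀
  have hexp : HasDerivAt (fun s : ℂ => Complex.exp (-s)) (-Complex.exp (-s₀)) s₀ := by
    have h := (Complex.hasDerivAt_exp (-s₀)).comp s₀ (hasDerivAt_neg s₀)
    simpa [mul_comm, Function.comp_def] using h
  have hd : HasDerivAt (fun s : ℂ => s - 2 + (s + 2) * Complex.exp (-s))
      (1 - (s₀ + 1) * Complex.exp (-s₀)) s₀ := by
    have h1 : HasDerivAt (fun s : ℂ => s - 2) 1 s₀ := (hasDerivAt_id s₀).sub_const 2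
    have h2 : HasDerivAt (fun s : ℂ => s + 2) 1 s₀ := (hasDerivAt_id s₀).add_const 2
    have h3 := h1.add (h2.mul hexp)
    refine h3.congr_deriv ?_
    ring
  rw [hd.deriv]
  intro h0
  have heq : (s₀ + 1) * Complex.exp (-s₀) = 1 := by
    exact (sub_eq_zero.mp h0).symm
  have habs : ‖(s₀ + 1)‖ * ‖Complex.exp (-s₀)‖ = 1 := by
    rw [← norm_mul, heq, norm_one]
  have hre : (-s₀).re = 0 := by simp [hs₀]
  have hexp1 : ‖Complex.exp (-s₀)‖ = 1 := by
    rw [Complex.norm_exp, hre, Real.exp_zero]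
  rw [hexp1, mul_one] at habs
  have hsq : Complex.normSq (s₀ + 1) = 1 := by
    have := congrArg (· ^ 2) habs
    simpa [Complex.sq_norm] using this
  have hval : (1 : ℝ) + 4 * ζ ^ 2 = 1 := by
    have : Complex.normSq (s₀ + 1) = 1 + 4 * ζ ^ 2 := by
      simp [hs₀, Complex.normSq_apply]
      ring
    linarith [hsq, this.symm.trans hsq]
  have : ζ = 0 := by nlinarith
  exact hζ this
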